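/- Let n ≥ 1, α > 0, N > α and A > 0, and let ψ : ℝⁿ → ℂ be a measurable function with |ψ(y)| ≤ A (1+|y|)^{−N} for all y ∈ ℝⁿ and ψ ∈ L¹(ℝⁿ). Then there is a constant C > 0, depending only on n, α, N and ‖ψ‖_{L¹}, such that for every finite Borel measure μ on ℝⁿ with [μ]_α < ∞ and every R > 0 the function g(x) := ∫_{ℝⁿ} Rⁿ ψ(R(x−y)) dμ(y) satisfies ‖g‖_{L²(ℝⁿ)} ≤ C A^{1/2} R^{(n−α)/2} μ(ℝⁿ)^{1/2} [μ]_α^{1/2}. -/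

import Mathlib

open MeasureTheory Real Metric
open scoped ENNReal

noncomputable section

abbrev E (n : ℕ) : Type := EuclideanSpace ℝ (Fin n)

/-- The Frostman constant `[μ]_α = sup_{x,r>0} μ(B(x,r))/r^α`. -/
def frostman {d : ℕ} (μ : Measure (E d)) (α : ℝ) : ℝ≥0∞ :=
  ⨆ (x : E d) (r : ℝ) (_ : 0 < r), μ (Metric.ball x r) / ENNReal.ofReal (r ^ α)

lemma frostman_ball_le {d : ℕ} (μ : Measure (E d)) {α r : ℝ} (hr : 0 < r) (x : E d) :
    μ (Metric.ball x r) ≤ frostman μ α * ENNReal.ofReal (r ^ α) := by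
  have hb0 : ENNReal.ofReal (r ^ α) ≠ 0 := by
    simp [ENNReal.ofReal_eq_zero, not_le]
    positivity
  have hbt : ENNReal.ofReal (r ^ α) ≠ ⊤ := ENNReal.ofReal_ne_top
  have h1 : μ (Metric.ball x r) / ENNReal.ofReal (r ^ α) ≤ frostman μ α :=
    le_iSup_of_le x (le_iSup_of_le r (le_iSup_of_le hr le_rfl))
  calc μ (Metric.ball x r) = μ (Metric.ball x r) / ENNReal.ofReal (r ^ α)
        * ENNReal.ofReal (r ^ α) := (ENNReal.div_mul_cancel hb0 hbt).symm
    _ ≤ frostman μ α * ENNReal.ofReal (r ^ α) := mul_le_mul_left h1 _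

lemma rpow_lintegral_aux {α N : ℝ} (hα : 0 < α) (hN : α < N) :
    ∫⁻ t in Set.Ioc (0:ℝ) 1, ENNReal.ofReal (t ^ (-(α/N))) ≤ ENNReal.ofReal (N/(N-α)) := by
  have hN0 : (0:ℝ) < N := hα.trans hN
  have h1 : -1 < -(α/N) := by
    have : α / N < 1 := (div_lt_one hN0).2 hN
    linarith
  have hint : IntervalIntegrable (fun t : ℝ => t ^ (-(α/N))) volume 0 1 :=
    intervalIntegral.intervalIntegrable_rpow' h1
  rw [intervalIntegrable_iff_integrableOn_Ioc_of_le zero_le_one] at hint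
  have h_nn : 0 ≤ᵐ[volume.restrict (Set.Ioc (0:ℝ) 1)] fun t : ℝ => t ^ (-(α/N)) :=
    (ae_restrict_iff' measurableSet_Ioc).2 (ae_of_all _ fun t ht => Real.rpow_nonneg ht.1.le _)
  rw [← MeasureTheory.ofReal_integral_eq_lintegral_ofReal hint h_nn]
  apply ENNReal.ofReal_le_ofReal
  rw [← intervalIntegral.integral_of_le zero_le_one, integral_rpow (Or.inl h1)]
  have hNα : (0:ℝ) < N - α := sub_pos.2 hN
  have he : -(α/N) + 1 = (N - α)/N := by field_simp; ring
  rw [Real.one_rpow, Real.zero_rpow (by rw [he]; positivity), sub_zero, he, one_div_div]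

lemma kernel_lintegral_le {d : ℕ} (μ : Measure (E d)) {α N R : ℝ}
    (hα : 0 < α) (hN : α < N) (hR : 0 < R) (x : E d) :
    ∫⁻ y, ENNReal.ofReal ((1 + R * dist x y) ^ (-N)) ∂μ ≤
      frostman μ α * ENNReal.ofReal ((N / (N - α)) * R ^ (-α)) := by
  have hN0 : (0:ℝ) < N := hα.trans hN
  set f : E d → ℝ := fun y => (1 + R * dist x y) ^ (-N) with hf
  have f_nn : ∀ y, 0 ≤ f y := fun y => Real.rpow_nonneg (by positivity) _
  have f_meas : Measurable f := by fun_prop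
  rw [lintegral_eq_lintegral_meas_lt μ (ae_of_all _ f_nn) f_meas.aemeasurable]
  have f_le_one : ∀ y, f y ≤ 1 := fun y =>
    Real.rpow_le_one_of_one_le_of_nonpos (le_add_of_nonneg_right (by positivity)) (by linarith)
  have hμbd : ∀ t ∈ Set.Ioc (0:ℝ) 1, μ {a | t < f a} ≤
      (frostman μ α * ENNReal.ofReal (R ^ (-α))) * ENNReal.ofReal (t ^ (-(α/N))) := by
    intro t ht
    set s := t ^ (-N⁻¹) with hs
    have hs1 : 1 ≤ s := Real.one_le_rpow_of_pos_of_le_one_of_nonpos ht.1 ht.2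
      (by simp [hN0.le])
    have hsub : {a | t < f a} ⊆ Metric.ball x (s / R) := by
      intro a ha
      simp only [Set.mem_setOf_eq, hf] at ha
      have hb : (0:ℝ) < 1 + R * dist x a := by positivity
      have h1 : ((1 + R * dist x a) ^ (-N)) ^ (-N⁻¹) < t ^ (-N⁻¹) :=
        Real.rpow_lt_rpow_of_neg ht.1 ha (by simp [hN0])
      rw [← Real.rpow_mul hb.le, neg_mul_neg, mul_inv_cancel₀ hN0.ne', Real.rpow_one] at h1
      rw [Metric.mem_ball, dist_comm, lt_div_iff₀ hR]
      rw [hs]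
      nlinarith [dist_nonneg (x := x) (y := a)]
    calc μ {a | t < f a} ≤ μ (Metric.ball x (s / R)) := measure_mono hsub
      _ ≤ frostman μ α * ENNReal.ofReal ((s / R) ^ α) :=
          frostman_ball_le μ (by positivity) x
      _ = (frostman μ α * ENNReal.ofReal (R ^ (-α))) * ENNReal.ofReal (t ^ (-(α/N))) := by
          rw [mul_assoc, ← ENNReal.ofReal_mul (by positivity)]
          congr 2
          rw [Real.div_rpow (by positivity) hR.le, hs, ← Real.rpow_mul ht.1.le,
            Real.rpow_neg hR.le, div_eq_mul_inv, mul_comm]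
          congr 2
          ring
  calc ∫⁻ t in Set.Ioi (0:ℝ), μ {a | t < f a}
      ≤ ∫⁻ t in Set.Ioc (0:ℝ) 1 ∪ Set.Ioi 1, μ {a | t < f a} :=
        lintegral_mono_set Set.Ioi_subset_Ioc_union_Ioi
    _ ≤ (∫⁻ t in Set.Ioc (0:ℝ) 1, μ {a | t < f a}) + ∫⁻ t in Set.Ioi (1:ℝ), μ {a | t < f a} :=
        lintegral_union_le _ _ _
    _ ≤ (frostman μ α * ENNReal.ofReal (R ^ (-α))) * ENNReal.ofReal (N/(N-α)) + 0 := by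
        gcongr
        · calc ∫⁻ t in Set.Ioc (0:ℝ) 1, μ {a | t < f a}
              ≤ ∫⁻ t in Set.Ioc (0:ℝ) 1,
                  (frostman μ α * ENNReal.ofReal (R ^ (-α))) * ENNReal.ofReal (t ^ (-(α/N))) :=
                setLIntegral_mono' measurableSet_Ioc hμbd
            _ = (frostman μ α * ENNReal.ofReal (R ^ (-α))) *
                  ∫⁻ t in Set.Ioc (0:ℝ) 1, ENNReal.ofReal (t ^ (-(α/N))) :=
                lintegral_const_mul _ (by fun_prop)
            _ ≤ _ := mul_le_mul_right (rpow_lintegral_aux hα hN) _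
        · have hempty : ∀ t ∈ Set.Ioi (1:ℝ), μ {a | t < f a} = 0 := by
            intro t ht
            have : {a | t < f a} = ∅ := by
              ext a
              simp only [Set.mem_setOf_eq, Set.mem_empty_iff_false, iff_false, not_lt]
              exact (f_le_one a).trans (le_of_lt ht)
            simp [this]
          rw [setLIntegral_congr_fun measurableSet_Ioi hempty]
          simp
    _ = frostman μ α * ENNReal.ofReal ((N/(N-α)) * R ^ (-α)) := by
        rw [add_zero, mul_assoc, ← ENNReal.ofReal_mul (by positivity), mul_comm (R ^ (-α))]

/-- an `L²` bound, `‖R^n ψ(R·) * μ‖_{L²} ≲ A^{1/2} R^{(n-α)/2} μ(ℝⁿ)^{1/2}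
[μ]_α^{1/2}`, for rapidly decaying integrable `ψ`; the constant depends only on `n`, `α`,
`N` and `‖ψ‖_{L¹}`. -/
theorem L2_mollified_measure_bound (n : ℕ) (hn : 1 ≤ n) (α N A : ℝ)
    (hα : 0 < α) (hN : α < N) (hA : 0 < A) (ψ : E n → ℂ) (hmeas : Measurable ψ)
    (hdecay : ∀ y, ‖ψ y‖ ≤ A * (1 + ‖y‖) ^ (-N)) (hint : Integrable ψ) :
    ∃ C : ℝ, 0 < C ∧
      ∀ (μ : Measure (E n)), IsFiniteMeasure μ → frostman μ α < ⊤ →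
        ∀ R : ℝ, 0 < R →
          eLpNorm (fun x => ∫ y, ((R : ℂ) ^ (n : ℕ)) * ψ (R • (x - y)) ∂μ) 2
              (volume : Measure (E n)) ≤
            ENNReal.ofReal (C * A ^ (1/2 : ℝ) * R ^ (((n : ℝ) - α) / 2) *
              (μ Set.univ).toReal ^ (1/2 : ℝ) * (frostman μ α).toReal ^ (1/2 : ℝ)) := by
  have hN0 : (0:ℝ) < N := hα.trans hN
  have hNα : (0:ℝ) < N - α := sub_pos.2 hN
  set c₀ : ℝ := N / (N - α) with hc₀def
  have hc₀ : 0 < c₀ := div_pos hN0 hNα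
  set L1 : ℝ := ∫ x, ‖ψ x‖ ∂(volume : Measure (E n)) with hL1def
  have hL1 : 0 ≤ L1 := integral_nonneg fun x => norm_nonneg _
  refine ⟨(c₀ * (L1 + 1)) ^ ((1:ℝ)/2), by positivity, ?_⟩
  intro μ hμfin hF R hR
  haveI := hμfin
  set F : ℝ≥0∞ := frostman μ α with hFdef
  set g : E n → ℂ := fun x => ∫ y, ((R : ℂ) ^ (n : ℕ)) * ψ (R • (x - y)) ∂μ with hgdef
  set m : ℝ := (μ Set.univ).toReal with hmdef
  set ff : ℝ := F.toReal with hffdef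
  have hμtop : μ Set.univ ≠ ⊤ := measure_ne_top μ _
  have hm0 : 0 ≤ m := ENNReal.toReal_nonneg
  have hff0 : 0 ≤ ff := ENNReal.toReal_nonneg
  -- pointwise decay of ψ in ℝ≥0∞ form
  have hψle : ∀ z : E n, (‖ψ z‖₊ : ℝ≥0∞) ≤
      ENNReal.ofReal A * ENNReal.ofReal ((1 + ‖z‖) ^ (-N)) := by
    intro z
    rw [← ENNReal.ofReal_mul hA.le, ← enorm_eq_nnnorm, ← ofReal_norm_eq_enorm]
    exact ENNReal.ofReal_le_ofReal (hdecay z)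
  have hnorm_smul : ∀ x y : E n, ‖R • (x - y)‖ = R * dist x y := by
    intro x y
    rw [norm_smul, Real.norm_eq_abs, abs_of_pos hR, dist_eq_norm]
  have hRn : (‖((R:ℂ) ^ (n : ℕ))‖₊ : ℝ≥0∞) = ENNReal.ofReal (R ^ (n : ℕ)) := by
    rw [← enorm_eq_nnnorm, ← ofReal_norm_eq_enorm, norm_pow, Complex.norm_real, Real.norm_eq_abs,
      abs_of_pos hR]
  set Ker : E n → E n → ℝ≥0∞ :=
    fun x y => ENNReal.ofReal (R ^ (n : ℕ)) * (‖ψ (R • (x - y))‖₊ : ℝ≥0∞) with hKer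
  have hg_le : ∀ x, (‖g x‖₊ : ℝ≥0∞) ≤ ∫⁻ y, Ker x y ∂μ := by
    intro x
    refine (enorm_integral_le_lintegral_enorm _).trans (le_of_eq ?_)
    refine lintegral_congr fun y => ?_
    rw [hKer, enorm_mul, enorm_eq_nnnorm, hRn, enorm_eq_nnnorm]
  set M : ℝ≥0∞ := ENNReal.ofReal (R ^ (n : ℕ) * A) * (F * ENNReal.ofReal (c₀ * R ^ (-α)))
    with hMdef
  have key1 : ∀ x, (∫⁻ y, Ker x y ∂μ) ≤ M := by
    intro x
    calc ∫⁻ y, Ker x y ∂μ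
        = ENNReal.ofReal (R ^ (n : ℕ)) * ∫⁻ y, (‖ψ (R • (x - y))‖₊ : ℝ≥0∞) ∂μ :=
          lintegral_const_mul' _ _ ENNReal.ofReal_ne_top
      _ ≤ ENNReal.ofReal (R ^ (n : ℕ)) *
            ∫⁻ y, ENNReal.ofReal A * ENNReal.ofReal ((1 + R * dist x y) ^ (-N)) ∂μ := by
          refine mul_le_mul_right (lintegral_mono fun y => ?_) _
          have := hψle (R • (x - y))
          rwa [hnorm_smul x y] at this
      _ = ENNReal.ofReal (R ^ (n : ℕ)) * (ENNReal.ofReal A *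
            ∫⁻ y, ENNReal.ofReal ((1 + R * dist x y) ^ (-N)) ∂μ) := by
          rw [lintegral_const_mul' _ _ ENNReal.ofReal_ne_top]
      _ ≤ ENNReal.ofReal (R ^ (n : ℕ)) * (ENNReal.ofReal A *
            (F * ENNReal.ofReal (c₀ * R ^ (-α)))) :=
          mul_le_mul_right (mul_le_mul_right (kernel_lintegral_le μ hα hN hR x) _) _
      _ = M := by
          rw [hMdef, ← mul_assoc, ← ENNReal.ofReal_mul (by positivity)]
  have hM_ne : M ≠ ⊤ :=
    ENNReal.mul_ne_top ENNReal.ofReal_ne_top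
      (ENNReal.mul_ne_top hF.ne ENNReal.ofReal_ne_top)
  -- L¹ bound
  have hKmeas : Measurable (Function.uncurry Ker) := by
    have h1 : Measurable fun p : E n × E n => R • (p.1 - p.2) :=
      (measurable_fst.sub measurable_snd).const_smul R
    exact (measurable_coe_nnreal_ennreal.comp ((hmeas.comp h1).nnnorm)).const_mul _
  have key2 : (∫⁻ x, (‖g x‖₊ : ℝ≥0∞) ∂(volume : Measure (E n))) ≤
      ENNReal.ofReal L1 * μ Set.univ := by
    have hinner : ∀ y : E n, (∫⁻ x, Ker x y ∂(volume : Measure (E n))) = ENNReal.ofReal L1 := by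
      intro y
      have hΦmeas : Measurable fun z : E n => (‖ψ z‖₊ : ℝ≥0∞) :=
        measurable_coe_nnreal_ennreal.comp hmeas.nnnorm
      have htrans : (∫⁻ x, (‖ψ (R • (x - y))‖₊ : ℝ≥0∞) ∂(volume : Measure (E n))) =
          ∫⁻ x, (‖ψ (R • x)‖₊ : ℝ≥0∞) ∂(volume : Measure (E n)) := by
        simp_rw [sub_eq_add_neg]
        exact lintegral_add_right_eq_self (fun x => (‖ψ (R • x)‖₊ : ℝ≥0∞)) (-y)
      have hscale : (∫⁻ x, (‖ψ (R • x)‖₊ : ℝ≥0∞) ∂(volume : Measure (E n))) =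
          ENNReal.ofReal ((R ^ (n : ℕ))⁻¹) * ∫⁻ z, (‖ψ z‖₊ : ℝ≥0∞) ∂(volume : Measure (E n)) := by
        have hmap := Measure.map_addHaar_smul (volume : Measure (E n)) (ne_of_gt hR)
        rw [finrank_euclideanSpace_fin] at hmap
        calc (∫⁻ x, (‖ψ (R • x)‖₊ : ℝ≥0∞) ∂(volume : Measure (E n)))
            = ∫⁻ z, (‖ψ z‖₊ : ℝ≥0∞) ∂((volume : Measure (E n)).map (R • ·)) :=
              (lintegral_map hΦmeas (measurable_const_smul R)).symm
          _ = _ := by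
              rw [hmap, lintegral_smul_measure, abs_of_pos (by positivity), smul_eq_mul]
      have hL1eq : (∫⁻ z, (‖ψ z‖₊ : ℝ≥0∞) ∂(volume : Measure (E n))) = ENNReal.ofReal L1 :=
        (ofReal_integral_norm_eq_lintegral_enorm hint).symm
      calc (∫⁻ x, Ker x y ∂(volume : Measure (E n)))
          = ENNReal.ofReal (R ^ (n : ℕ)) *
              ∫⁻ x, (‖ψ (R • (x - y))‖₊ : ℝ≥0∞) ∂(volume : Measure (E n)) :=
            lintegral_const_mul' _ _ ENNReal.ofReal_ne_top
        _ = ENNReal.ofReal (R ^ (n : ℕ)) *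
              (ENNReal.ofReal ((R ^ (n : ℕ))⁻¹) * ENNReal.ofReal L1) := by
            rw [htrans, hscale, hL1eq]
        _ = ENNReal.ofReal L1 := by
            rw [← mul_assoc, ← ENNReal.ofReal_mul (by positivity),
              mul_inv_cancel₀ (by positivity), ENNReal.ofReal_one, one_mul]
    calc (∫⁻ x, (‖g x‖₊ : ℝ≥0∞) ∂(volume : Measure (E n)))
        ≤ ∫⁻ x, (∫⁻ y, Ker x y ∂μ) ∂(volume : Measure (E n)) := lintegral_mono hg_le
      _ = ∫⁻ y, (∫⁻ x, Ker x y ∂(volume : Measure (E n))) ∂μ :=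
          lintegral_lintegral_swap hKmeas.aemeasurable
      _ = ∫⁻ _, ENNReal.ofReal L1 ∂μ := lintegral_congr hinner
      _ = ENNReal.ofReal L1 * μ Set.univ := by rw [lintegral_const]
  -- assemble
  have step : (∫⁻ x, (‖g x‖₊ : ℝ≥0∞) ^ (2:ℝ) ∂(volume : Measure (E n))) ≤
      M * (ENNReal.ofReal L1 * μ Set.univ) := by
    calc (∫⁻ x, (‖g x‖₊ : ℝ≥0∞) ^ (2:ℝ) ∂(volume : Measure (E n)))
        ≤ ∫⁻ x, M * (‖g x‖₊ : ℝ≥0∞) ∂(volume : Measure (E n)) := by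
          refine lintegral_mono fun x => ?_
          rw [show ((2:ℝ) = ((2:ℕ) : ℝ)) by norm_num, ENNReal.rpow_natCast, pow_two]
          exact mul_le_mul' ((hg_le x).trans (key1 x)) le_rfl
      _ = M * ∫⁻ x, (‖g x‖₊ : ℝ≥0∞) ∂(volume : Measure (E n)) :=
          lintegral_const_mul' _ _ hM_ne
      _ ≤ M * (ENNReal.ofReal L1 * μ Set.univ) := mul_le_mul_right key2 _
  set RHSr : ℝ := (c₀ * (L1 + 1)) ^ ((1:ℝ)/2) * A ^ (1/2 : ℝ) * R ^ (((n : ℝ) - α) / 2) *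
    m ^ (1/2 : ℝ) * ff ^ (1/2 : ℝ) with hRHSr
  have hRHSr0 : 0 ≤ RHSr := by positivity
  have hsq : M * (ENNReal.ofReal L1 * μ Set.univ) ≤ ENNReal.ofReal (RHSr ^ 2) := by
    have hFeq : F = ENNReal.ofReal ff := (ENNReal.ofReal_toReal hF.ne).symm
    have hμeq : μ Set.univ = ENNReal.ofReal m := (ENNReal.ofReal_toReal hμtop).symm
    have hRpow : R ^ (n : ℕ) * R ^ (-α) = R ^ ((n : ℝ) - α) := by
      rw [← Real.rpow_natCast R n, ← Real.rpow_add hR, sub_eq_add_neg]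
    have sqr : ∀ x : ℝ, 0 ≤ x → (x ^ ((1:ℝ)/2)) ^ 2 = x := by
      intro x hx
      rw [← Real.rpow_natCast (x ^ ((1:ℝ)/2)) 2, ← Real.rpow_mul hx]
      norm_num
    have e3 : (R ^ (((n:ℝ) - α)/2)) ^ 2 = R ^ ((n:ℝ) - α) := by
      rw [← Real.rpow_natCast (R ^ (((n:ℝ) - α)/2)) 2, ← Real.rpow_mul hR.le]
      norm_num
    have hRHS2 : RHSr ^ 2 = c₀ * (L1 + 1) * A * R ^ ((n : ℝ) - α) * m * ff := by
      rw [hRHSr, mul_pow, mul_pow, mul_pow, mul_pow, sqr _ (by positivity), sqr _ hA.le,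
        sqr _ hm0, sqr _ hff0, e3]
    calc M * (ENNReal.ofReal L1 * μ Set.univ)
        = ENNReal.ofReal ((R ^ (n : ℕ) * A) * ((c₀ * R ^ (-α)) * (ff * (L1 * m)))) := by
          rw [hMdef, hFeq, hμeq, ← ENNReal.ofReal_mul hL1, ← ENNReal.ofReal_mul hff0,
            ← ENNReal.ofReal_mul (by positivity), ← ENNReal.ofReal_mul (by positivity)]
          congr 1
          ring
      _ ≤ ENNReal.ofReal (RHSr ^ 2) := by
          apply ENNReal.ofReal_le_ofReal
          rw [hRHS2]
          have : (R ^ (n : ℕ) * A) * ((c₀ * R ^ (-α)) * (ff * (L1 * m))) =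
              c₀ * L1 * A * (R ^ (n : ℕ) * R ^ (-α)) * m * ff := by ring
          rw [this, hRpow]
          have hRp0 : 0 ≤ R ^ ((n : ℝ) - α) := Real.rpow_nonneg hR.le _
          nlinarith [mul_nonneg (mul_nonneg (mul_nonneg (mul_nonneg hc₀.le hA.le) hRp0) hm0) hff0]
    -- end hsq
  have hfin : eLpNorm g 2 (volume : Measure (E n)) ≤ ENNReal.ofReal RHSr := by
    rw [eLpNorm_eq_lintegral_rpow_enorm_toReal (by norm_num) (by norm_num)]
    have h2 : ((2:ℝ≥0∞)).toReal = (2:ℝ) := by norm_num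
    rw [h2]
    calc (∫⁻ x, (‖g x‖₊ : ℝ≥0∞) ^ (2:ℝ) ∂(volume : Measure (E n))) ^ ((1:ℝ)/2)
        ≤ (ENNReal.ofReal (RHSr ^ 2)) ^ ((1:ℝ)/2) :=
          ENNReal.rpow_le_rpow (step.trans hsq) (by norm_num)
      _ = ENNReal.ofReal RHSr := by
          rw [ENNReal.ofReal_pow hRHSr0, ← ENNReal.rpow_natCast (ENNReal.ofReal RHSr) 2,
            ← ENNReal.rpow_mul]
          norm_num
  exact hfin
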